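/- Let 𝔥 be an absolutely integrable real random variable and a > 0 a constant. Then for each fixed a > 0 the equation (a/2)·β² = ln 2 + E[ln cosh(β𝔥)] − β·E[𝔥·tanh(β𝔥)] has a unique positive solution β_c, and β_c is a decreasing function of a. -/

import Mathlib

open Real MeasureTheory
open scoped MeasureTheory

noncomputable def ψ (y : ℝ) : ℝ := Real.log (Real.cosh y) - y * Real.tanh y

lemma tanh_def' (y : ℝ) : Real.tanh y = Real.sinh y / Real.cosh y :=
  Real.tanh_eq_sinh_div_cosh y

lemma continuous_tanh' : Continuous Real.tanh := by
  have : Real.tanh = fun y => Real.sinh y / Real.cosh y := funext tanh_def'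
  rw [this]
  exact Real.continuous_sinh.div Real.continuous_cosh fun x => (Real.cosh_pos x).ne'

lemma abs_tanh_le_one (y : ℝ) : |Real.tanh y| ≤ 1 := by
  rw [tanh_def', abs_div, abs_of_pos (Real.cosh_pos y), div_le_one (Real.cosh_pos y)]
  nlinarith [Real.cosh_sq y, abs_nonneg (Real.sinh y), sq_abs (Real.sinh y),
    Real.cosh_pos y]

lemma tanh_sq_le_one (y : ℝ) : Real.tanh y ^ 2 ≤ 1 := by
  have := abs_tanh_le_one y
  nlinarith [abs_nonneg (Real.tanh y), sq_abs (Real.tanh y)]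

lemma hasDerivAt_tanh' (y : ℝ) :
    HasDerivAt Real.tanh (1 - Real.tanh y ^ 2) y := by
  have h : HasDerivAt (fun x => Real.sinh x / Real.cosh x)
      ((Real.cosh y * Real.cosh y - Real.sinh y * Real.sinh y) / Real.cosh y ^ 2) y :=
    (Real.hasDerivAt_sinh y).div (Real.hasDerivAt_cosh y) (Real.cosh_pos y).ne'
  have he : Real.tanh = fun x => Real.sinh x / Real.cosh x := funext tanh_def'
  rw [he]
  convert h using 1
  have hc := (Real.cosh_pos y).ne'
  simp only [tanh_def']
  field_simp

lemma hasDerivAt_ψ (y : ℝ) :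
    HasDerivAt ψ (-(y * (1 - Real.tanh y ^ 2))) y := by
  have hlog : HasDerivAt (fun x => Real.log (Real.cosh x)) (Real.sinh y / Real.cosh y) y :=
    (Real.hasDerivAt_cosh y).log (Real.cosh_pos y).ne'
  have hmul : HasDerivAt (fun x => x * Real.tanh x)
      (1 * Real.tanh y + y * (1 - Real.tanh y ^ 2)) y :=
    (hasDerivAt_id y).mul (hasDerivAt_tanh' y)
  have := hlog.sub hmul
  have e : ψ = (fun x => Real.log (Real.cosh x)) - fun x => x * Real.tanh x := by
    funext x; rfl
  rw [e]
  refine this.congr_deriv ?_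
  rw [← tanh_def']
  ring

lemma ψ_antitoneOn : AntitoneOn ψ (Set.Ici (0:ℝ)) := by
  apply antitoneOn_of_deriv_nonpos (convex_Ici 0)
  · exact (Continuous.continuousOn (by
      have : Continuous ψ := by
        unfold ψ
        exact ((Real.continuous_cosh.log fun x => (Real.cosh_pos x).ne')).sub
          (continuous_id.mul continuous_tanh')
      exact this))
  · intro x _
    exact (hasDerivAt_ψ x).differentiableAt.differentiableWithinAt
  · intro x hx
    rw [(hasDerivAt_ψ x).deriv]
    rw [interior_Ici] at hx
    have h1 := tanh_sq_le_one x
    have : (0:ℝ) < x := hx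
    nlinarith

lemma continuous_ψ : Continuous ψ := by
  unfold ψ
  exact ((Real.continuous_cosh.log fun x => (Real.cosh_pos x).ne')).sub
    (continuous_id.mul continuous_tanh')

lemma ψ_abs (y : ℝ) : ψ |y| = ψ y := by
  rcases abs_choice y with h | h
  · rw [h]
  · rw [h]; unfold ψ
    rw [Real.cosh_neg, Real.tanh_neg]; ring_nf

lemma ψ_zero : ψ 0 = 0 := by simp [ψ]

lemma ψ_nonpos (y : ℝ) : ψ y ≤ 0 := by
  rw [← ψ_abs y, ← ψ_zero]
  exact ψ_antitoneOn (Set.mem_Ici.2 le_rfl) (Set.mem_Ici.2 (abs_nonneg y)) (abs_nonneg y)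

lemma ψ_ge (y : ℝ) : -Real.log 2 ≤ ψ y := by
  unfold ψ
  have h1 : y * Real.tanh y ≤ |y| := by
    calc y * Real.tanh y ≤ |y * Real.tanh y| := le_abs_self _
    _ = |y| * |Real.tanh y| := abs_mul _ _
    _ ≤ |y| * 1 := by
        exact mul_le_mul_of_nonneg_left (abs_tanh_le_one y) (abs_nonneg y)
    _ = |y| := mul_one _
  have h2 : |y| ≤ Real.log 2 + Real.log (Real.cosh y) := by
    have hc : Real.exp |y| ≤ 2 * Real.cosh y := by
      rw [Real.cosh_eq]
      rcases abs_cases y with ⟨h, _⟩ | ⟨h, _⟩ <;> rw [h] <;>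
        nlinarith [Real.exp_pos y, Real.exp_pos (-y)]
    have := Real.log_le_log (Real.exp_pos _) hc
    rwa [Real.log_exp, Real.log_mul two_ne_zero (Real.cosh_pos y).ne'] at this
  linarith

lemma abs_ψ_le (y : ℝ) : |ψ y| ≤ Real.log 2 := by
  rw [abs_le]
  constructor
  · exact ψ_ge y
  · exact (ψ_nonpos y).trans (Real.log_nonneg one_le_two)

lemma logcosh_bound (y : ℝ) : |Real.log (Real.cosh y)| ≤ |y| := by
  rw [abs_of_nonneg (Real.log_nonneg (Real.one_le_cosh y))]
  have : Real.cosh y ≤ Real.exp |y| := by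
    rw [Real.cosh_eq]
    rcases abs_cases y with ⟨h, hy⟩ | ⟨h, hy⟩ <;> rw [h]
    · have := Real.exp_le_exp.2 (by linarith : -y ≤ y); linarith
    · have := Real.exp_le_exp.2 (by linarith : y ≤ -y); linarith
  calc Real.log (Real.cosh y) ≤ Real.log (Real.exp |y|) :=
        Real.log_le_log (Real.cosh_pos y) this
  _ = |y| := Real.log_exp _

lemma ψ_mul_anti {b1 b2 x : ℝ} (h0 : 0 ≤ b1) (h12 : b1 ≤ b2) :
    ψ (b2 * x) ≤ ψ (b1 * x) := by
  rw [← ψ_abs (b1 * x), ← ψ_abs (b2 * x)]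
  apply ψ_antitoneOn (Set.mem_Ici.2 (abs_nonneg _)) (Set.mem_Ici.2 (abs_nonneg _))
  rw [abs_mul, abs_mul]
  exact mul_le_mul_of_nonneg_right
    (by rw [abs_of_nonneg h0, abs_of_nonneg (h0.trans h12)]; exact h12) (abs_nonneg x)

/-- For an absolutely integrable random variable `𝔥` and each `a > 0`, the equation
`(a/2)·β² = ln 2 + E[ln cosh(β𝔥)] − β·E[𝔥·tanh(β𝔥)]` has a unique positive solution `β_c`,
and this solution is a decreasing function of `a`. -/
theorem exists_unique_critical_beta_random_field
    {Ω : Type*} [MeasureSpace Ω] [IsProbabilityMeasure (volume : Measure Ω)]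
    (𝔥 : Ω → ℝ) (h𝔥 : Integrable 𝔥) :
    (∀ a : ℝ, 0 < a → ∃! β : ℝ, 0 < β ∧
      a / 2 * β ^ 2 =
        Real.log 2 + (∫ ω, Real.log (Real.cosh (β * 𝔥 ω)))
          - β * ∫ ω, 𝔥 ω * Real.tanh (β * 𝔥 ω)) ∧
    (∀ a a' βa βa' : ℝ, 0 < a → a ≤ a' →
      (0 < βa ∧ a / 2 * βa ^ 2 =
        Real.log 2 + (∫ ω, Real.log (Real.cosh (βa * 𝔥 ω)))
          - βa * ∫ ω, 𝔥 ω * Real.tanh (βa * 𝔥 ω)) →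
      (0 < βa' ∧ a' / 2 * βa' ^ 2 =
        Real.log 2 + (∫ ω, Real.log (Real.cosh (βa' * 𝔥 ω)))
          - βa' * ∫ ω, 𝔥 ω * Real.tanh (βa' * 𝔥 ω)) →
      βa' ≤ βa) := by
  have hmeas : AEStronglyMeasurable 𝔥 (volume : Measure Ω) := h𝔥.1
  -- integrability facts
  have I1 : ∀ β : ℝ, Integrable (fun ω => Real.log (Real.cosh (β * 𝔥 ω))) := by
    intro β
    refine (h𝔥.const_mul β).abs.mono ?_ ?_
    · exact (Real.continuous_cosh.log fun x => (Real.cosh_pos x).ne').comp_aestronglyMeasurable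
        (hmeas.const_mul β)
    · filter_upwards with ω
      simpa [abs_abs] using logcosh_bound (β * 𝔥 ω)
  have I2 : ∀ β : ℝ, Integrable (fun ω => 𝔥 ω * Real.tanh (β * 𝔥 ω)) := by
    intro β
    refine h𝔥.mono (hmeas.mul
      ((continuous_tanh'.comp_aestronglyMeasurable (hmeas.const_mul β)))) ?_
    filter_upwards with ω
    rw [Real.norm_eq_abs, Real.norm_eq_abs, abs_mul]
    calc |𝔥 ω| * |Real.tanh (β * 𝔥 ω)| ≤ |𝔥 ω| * 1 :=
          mul_le_mul_of_nonneg_left (abs_tanh_le_one _) (abs_nonneg _)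
    _ = |𝔥 ω| := mul_one _
  have Iψ : ∀ β : ℝ, Integrable (fun ω => ψ (β * 𝔥 ω)) := by
    intro β
    refine (integrable_const (Real.log 2)).mono
      ((continuous_ψ.comp_aestronglyMeasurable (hmeas.const_mul β))) ?_
    filter_upwards with ω
    rw [Real.norm_eq_abs, Real.norm_eq_abs,
      abs_of_nonneg (Real.log_nonneg one_le_two)]
    exact abs_ψ_le _
  -- the key reformulation
  set Φ : ℝ → ℝ := fun β => ∫ ω, ψ (β * 𝔥 ω) with hΦdef
  have key : ∀ β : ℝ,
      Real.log 2 + (∫ ω, Real.log (Real.cosh (β * 𝔥 ω)))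
        - β * ∫ ω, 𝔥 ω * Real.tanh (β * 𝔥 ω) = Real.log 2 + Φ β := by
    intro β
    have h1 : Φ β = (∫ ω, Real.log (Real.cosh (β * 𝔥 ω)))
        - β * ∫ ω, 𝔥 ω * Real.tanh (β * 𝔥 ω) := by
      show (∫ ω, ψ (β * 𝔥 ω)) = _
      have : (fun ω => ψ (β * 𝔥 ω))
          = fun ω => Real.log (Real.cosh (β * 𝔥 ω)) - β * (𝔥 ω * Real.tanh (β * 𝔥 ω)) := by
        funext ω; unfold ψ; ring
      rw [this, integral_sub (I1 β) ((I2 β).const_mul β), integral_const_mul]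
    rw [h1]; ring
  have Φ_anti : ∀ b1 b2 : ℝ, 0 ≤ b1 → b1 ≤ b2 → Φ b2 ≤ Φ b1 := by
    intro b1 b2 h0 h12
    exact integral_mono (Iψ b2) (Iψ b1) fun ω => ψ_mul_anti h0 h12
  have Φ_zero : Φ 0 = 0 := by simp [hΦdef, ψ_zero]
  have Φ_nonpos : ∀ β : ℝ, 0 ≤ β → Φ β ≤ 0 := fun β hβ => by
    rw [← Φ_zero]; exact Φ_anti 0 β le_rfl hβ
  have Φ_cont : Continuous Φ := by
    rw [continuous_iff_continuousAt]
    intro β₀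
    apply continuousAt_of_dominated (bound := fun _ => Real.log 2)
    · filter_upwards with β
      exact continuous_ψ.comp_aestronglyMeasurable (hmeas.const_mul β)
    · filter_upwards with β
      filter_upwards with ω
      rw [Real.norm_eq_abs]
      exact abs_ψ_le _
    · exact integrable_const _
    · filter_upwards with ω
      exact (continuous_ψ.comp (continuous_id.mul continuous_const)).continuousAt
  have hlog2 : (0:ℝ) < Real.log 2 := Real.log_pos one_lt_two
  -- existence and uniqueness for each a
  have main : ∀ a : ℝ, 0 < a → ∃! β : ℝ, 0 < β ∧
      a / 2 * β ^ 2 = Real.log 2 + Φ β := by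
    intro a ha
    set M : ℝ := Real.sqrt (2 * Real.log 2 / a) with hM
    have hMpos : 0 < M := Real.sqrt_pos.2 (by positivity)
    have hM2 : a / 2 * M ^ 2 = Real.log 2 := by
      rw [hM, Real.sq_sqrt (by positivity)]
      field_simp
    set F : ℝ → ℝ := fun β => a / 2 * β ^ 2 - (Real.log 2 + Φ β) with hF
    have hFcont : Continuous F := by
      apply Continuous.sub
      · continuity
      · exact continuous_const.add Φ_cont
    have hF0 : F 0 < 0 := by simp [hF, Φ_zero]; linarith
    have hFM : 0 ≤ F M := by
      have := Φ_nonpos M hMpos.le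
      simp only [hF]
      rw [hM2]
      linarith
    have : (0:ℝ) ∈ Set.Icc (F 0) (F M) := ⟨hF0.le, hFM⟩
    obtain ⟨c, hcmem, hc⟩ := intermediate_value_Icc hMpos.le hFcont.continuousOn this
    have hcpos : 0 < c := by
      rcases hcmem.1.lt_or_eq with h | h
      · exact h
      · exfalso; rw [← h] at hc; linarith
    have hceq : a / 2 * c ^ 2 = Real.log 2 + Φ c := by
      have : a / 2 * c ^ 2 - (Real.log 2 + Φ c) = 0 := hc
      linarith
    refine ⟨c, ⟨hcpos, hceq⟩, ?_⟩
    rintro y ⟨hypos, hyeq⟩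
    rcases le_total y c with h | h
    · have h1 : Φ c ≤ Φ y := Φ_anti y c hypos.le h
      have h2 : a / 2 * c ^ 2 ≤ a / 2 * y ^ 2 := by linarith
      have h3 : c ^ 2 ≤ y ^ 2 := by nlinarith
      have h4 : c ≤ y := by nlinarith
      exact le_antisymm h h4
    · have h1 : Φ y ≤ Φ c := Φ_anti c y hcpos.le h
      have h2 : a / 2 * y ^ 2 ≤ a / 2 * c ^ 2 := by linarith
      have h3 : y ^ 2 ≤ c ^ 2 := by nlinarith
      have h4 : y ≤ c := by nlinarith
      exact le_antisymm h4 h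
  constructor
  · intro a ha
    obtain ⟨c, ⟨hcpos, hceq⟩, huniq⟩ := main a ha
    refine ⟨c, ⟨hcpos, by rw [key]; exact hceq⟩, ?_⟩
    rintro y ⟨hypos, hyeq⟩
    exact huniq y ⟨hypos, by rw [← key]; exact hyeq⟩
  · rintro a a' βa βa' ha haa' ⟨hβa, heqa⟩ ⟨hβa', heqa'⟩
    rw [key] at heqa heqa'
    by_contra h
    push_neg at h
    have h1 : Φ βa' ≤ Φ βa := Φ_anti βa βa' hβa.le h.le
    have ha' : 0 < a' := ha.trans_le haa'
    have h2 : a' / 2 * βa' ^ 2 ≤ a / 2 * βa ^ 2 := by linarith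
    have h3 : a / 2 * βa ^ 2 ≤ a' / 2 * βa ^ 2 := by nlinarith
    have h5 : βa ^ 2 < βa' ^ 2 := by nlinarith
    nlinarith
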